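/- Define f_∞ : B → B on the set B of binary sequences (ℕ → 𝔽₂) not eventually constantly 1, by: find the least i with a_i = 0, add 1 to a_{i+1}, then add 1 to a_0. Then f_∞ is a bijection of B. -/

import Mathlib

/-- The set of binary sequences not eventually constantly `1`. -/
def Bset : Set (ℕ → ZMod 2) := {a | ∀ n, ∃ m, n ≤ m ∧ a m = 0}

open Classical

/-- The Arnoux–Yoccoz exchange `f_∞`: at the least index `i` with `a i = 0`,
add `1` to `a (i+1)`; then add `1` to `a 0`. (Defined as the identity off the
set of sequences possessing a zero digit.) -/
noncomputable def fInf (a : ℕ → ZMod 2) : ℕ → ZMod 2 :=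
  if h : ∃ i, a i = 0 then
    fun n => if n = 0 then a 0 + 1
             else if n = Nat.find h + 1 then a n + 1
             else a n
  else a

/-- Prepend a digit to a binary sequence. -/
def prepend (b : ZMod 2) (a : ℕ → ZMod 2) : ℕ → ZMod 2 :=
  fun n => match n with
  | 0 => b
  | k + 1 => a k

/- ### Auxiliary material -/

lemma zmod2_addone (x : ZMod 2) : x + 1 + 1 = x := by revert x; decide

lemma zmod2_ne1 {x : ZMod 2} (h : ¬ x = 1) : x = 0 := by revert h; revert x; decide

lemma zmod2_zero_ne_one : (0 : ZMod 2) ≠ 1 := by decide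

lemma zmod2_ne0 {x : ZMod 2} (h : ¬ x = 0) : x = 1 := by revert h; revert x; decide

lemma zmod2_one_one : (1 : ZMod 2) + 1 = 0 := by decide

/-- Inverse of `fInf` on `Bset`. -/
noncomputable def gInf (b : ℕ → ZMod 2) : ℕ → ZMod 2 :=
  if b 0 = 1 then
    fun n => if n = 0 then 0 else if n = 1 then b 1 + 1 else b n
  else if h : ∃ j, b (j + 1) = 0 then
    fun n => if n = 0 then 1 else if n = Nat.find h + 2 then b n + 1 else b n
  else b

lemma fInf_of_exists (a : ℕ → ZMod 2) (h : ∃ i, a i = 0) :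
    fInf a = fun n => if n = 0 then a 0 + 1
             else if n = Nat.find h + 1 then a n + 1
             else a n := by
  simp only [fInf, dif_pos h]

lemma mem_Bset_of_eventually {a b : ℕ → ZMod 2} (ha : a ∈ Bset) (N : ℕ)
    (h : ∀ n, N ≤ n → b n = a n) : b ∈ Bset := by
  intro n
  obtain ⟨m, hm, h0⟩ := ha (max n N)
  exact ⟨m, le_trans (le_max_left _ _) hm,
    (h m (le_trans (le_max_right _ _) hm)).trans h0⟩

lemma exists_zero_of_mem {a : ℕ → ZMod 2} (ha : a ∈ Bset) : ∃ i, a i = 0 := by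
  obtain ⟨m, _, h0⟩ := ha 0
  exact ⟨m, h0⟩

lemma mapsTo_fInf : Set.MapsTo fInf Bset Bset := by
  intro a ha
  have h : ∃ i, a i = 0 := exists_zero_of_mem ha
  refine mem_Bset_of_eventually ha (Nat.find h + 2) ?_
  intro n hn
  rw [fInf_of_exists a h]
  have h1 : n ≠ 0 := by omega
  have h2 : n ≠ Nat.find h + 1 := by omega
  simp [h1, h2]

lemma mapsTo_gInf : Set.MapsTo gInf Bset Bset := by
  intro b hb
  by_cases hb0 : b 0 = 1
  · refine mem_Bset_of_eventually hb 2 ?_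
    intro n hn
    have h1 : n ≠ 0 := by omega
    have h2 : n ≠ 1 := by omega
    simp [gInf, hb0, h1, h2]
  · by_cases h : ∃ j, b (j + 1) = 0
    · refine mem_Bset_of_eventually hb (Nat.find h + 3) ?_
      intro n hn
      have h1 : n ≠ 0 := by omega
      have h2 : n ≠ Nat.find h + 2 := by omega
      simp [gInf, hb0, dif_pos h, h1, h2]
    · simpa [gInf, hb0, dif_neg h] using hb

lemma gInf_fInf {a : ℕ → ZMod 2} (ha : a ∈ Bset) : gInf (fInf a) = a := by
  have h : ∃ i, a i = 0 := exists_zero_of_mem ha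
  have hai : a (Nat.find h) = 0 := Nat.find_spec h
  have hmin : ∀ j, j < Nat.find h → a j ≠ 0 := fun j hj => Nat.find_min h hj
  have hfa := fInf_of_exists a h
  rcases Nat.eq_zero_or_pos (Nat.find h) with h0 | hpos
  · -- least zero index is 0
    have ha0 : a 0 = 0 := by rw [← h0]; exact hai
    have hb0 : fInf a 0 = 1 := by rw [hfa]; simp [ha0]
    funext n
    rw [gInf, if_pos hb0]
    match n with
    | 0 => simp [ha0]
    | 1 => simp [hfa, h0, zmod2_addone]
    | (n + 2) => simp [hfa, h0]
  · -- least zero index is k + 1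
    obtain ⟨k, hk⟩ : ∃ k, Nat.find h = k + 1 := ⟨Nat.find h - 1, by omega⟩
    have ha0 : a 0 = 1 := zmod2_ne0 (hmin 0 (by omega))
    have hb0 : fInf a 0 = 0 := by rw [hfa]; simp [ha0, zmod2_one_one]
    have hb0' : ¬ fInf a 0 = 1 := by rw [hb0]; exact zmod2_zero_ne_one
    have hbk : fInf a (k + 1) = 0 := by
      rw [hfa]; simp only [Nat.succ_ne_zero, if_false, hk]
      have : k + 1 ≠ k + 1 + 1 := by omega
      simp [this, ← hk, hai]
    have h2 : ∃ j, fInf a (j + 1) = 0 := ⟨k, hbk⟩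
    have hfind2 : Nat.find h2 = k := by
      rw [Nat.find_eq_iff]
      refine ⟨hbk, ?_⟩
      intro j hj hj0
      have hj1 : (j : ℕ) + 1 ≠ 0 := by omega
      have hj2 : (j : ℕ) + 1 ≠ Nat.find h + 1 := by omega
      rw [hfa] at hj0
      simp only [hj1, if_false, hj2] at hj0
      exact hmin (j + 1) (by omega) hj0
    funext n
    rw [gInf, if_neg hb0', dif_pos h2, hfind2]
    match n with
    | 0 => simp [ha0]
    | (m + 1) =>
      have hm1 : (m : ℕ) + 1 ≠ 0 := by omega
      by_cases hc : m + 1 = k + 2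
      · simp only [hm1, if_false, if_pos hc]
        rw [hfa]
        simp only [hm1, if_false]
        have : m + 1 = Nat.find h + 1 := by omega
        simp [this, zmod2_addone]
      · simp only [hm1, if_false, if_neg hc]
        rw [hfa]
        have : m + 1 ≠ Nat.find h + 1 := by omega
        simp [hm1, this]; omega

lemma fInf_gInf {b : ℕ → ZMod 2} (hb : b ∈ Bset) : fInf (gInf b) = b := by
  by_cases hb0 : b 0 = 1
  · have hg : gInf b = fun n => if n = 0 then 0 else if n = 1 then b 1 + 1 else b n :=
      if_pos hb0
    have h : ∃ i, gInf b i = 0 := ⟨0, by simp [hg]⟩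
    have hfind : Nat.find h = 0 := by
      rw [Nat.find_eq_zero]; simp [hg]
    rw [fInf_of_exists _ h, hfind]
    funext n
    match n with
    | 0 => simp [hg, hb0]
    | 1 => simp [hg, zmod2_addone]
    | (n + 2) => simp [hg]
  · have hb0' : b 0 = 0 := zmod2_ne1 hb0
    have h2 : ∃ j, b (j + 1) = 0 := by
      obtain ⟨m, hm, h0⟩ := hb 1
      exact ⟨m - 1, by rwa [Nat.sub_add_cancel hm]⟩
    have hg : gInf b = fun n => if n = 0 then 1
        else if n = Nat.find h2 + 2 then b n + 1 else b n := by
      rw [gInf, if_neg hb0, dif_pos h2]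
    set k := Nat.find h2 with hkdef
    have hbk : b (k + 1) = 0 := Nat.find_spec h2
    have h : ∃ i, gInf b i = 0 := ⟨k + 1, by
      rw [hg]
      have h1 : (k : ℕ) + 1 ≠ 0 := by omega
      have hc : (k : ℕ) + 1 ≠ k + 2 := by omega
      simp [h1, hc, hbk]⟩
    have hfind : Nat.find h = k + 1 := by
      rw [Nat.find_eq_iff]
      constructor
      · rw [hg]
        have h1 : (k : ℕ) + 1 ≠ 0 := by omega
        have hc : (k : ℕ) + 1 ≠ k + 2 := by omega
        simp [h1, hc, hbk]
      · intro n hn hn0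
        rw [hg] at hn0
        match n with
        | 0 => simp at hn0
        | (m + 1) =>
          have h1 : (m : ℕ) + 1 ≠ 0 := by omega
          have hc : (m : ℕ) + 1 ≠ k + 2 := by omega
          simp only [h1, if_false, hc] at hn0
          exact Nat.find_min h2 (show m < k by omega) hn0
    rw [fInf_of_exists _ h, hfind]
    funext n
    match n with
    | 0 =>
      simp only [if_pos rfl]
      rw [hg]
      simp [hb0', zmod2_one_one]
    | (m + 1) =>
      have h1 : (m : ℕ) + 1 ≠ 0 := by omega
      simp only [h1, if_false]
      by_cases hc : m + 1 = k + 1 + 1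
      · rw [if_pos hc, hg]
        have hc' : m + 1 = k + 2 := by omega
        simp [h1, hc', zmod2_addone]
      · rw [if_neg hc, hg]
        have hc' : (m : ℕ) + 1 ≠ k + 2 := by omega
        simp [h1, hc']; omega

/-- `f_∞` is a bijection of `B`. -/
theorem fInf_bijOn : Set.BijOn fInf Bset Bset := by
  have hinv : Set.InvOn gInf fInf Bset Bset :=
    ⟨fun a ha => gInf_fInf ha, fun b hb => fInf_gInf hb⟩
  exact hinv.bijOn mapsTo_fInf mapsTo_gInf
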